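/- Let p = Mf + 1 be an odd prime with M ≥ 2 and f ≥ 1, and let U = {X_0, …, X_{M−1}} be the (p, M, M)-FHS set of Construction A, where X_i(0) = i and X_i(t) = r + i (mod M) whenever t ∈ C_r, with C_r the cyclotomic classes of order M in F_p. Then the average Hamming crosscorrelation of U equals A_c(U) = (Mf² + 2f)/(Mf + 1) (as a rational number). -/

import Mathlib

open Finset

/-- Periodic Hamming correlation of two FHSs `X, Y : ZMod N → F` at shift `τ`. -/
def Hcorr {N : ℕ} [NeZero N] {F : Type*} [DecidableEq F]
    (X Y : ZMod N → F) (τ : ZMod N) : ℕ :=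
  (Finset.univ.filter (fun t => X t = Y (t + τ))).card

/-- `N_X(a)`: number of occurrences of frequency `a` in the FHS `X`. -/
def countFreq {N : ℕ} [NeZero N] {F : Type*} [DecidableEq F]
    (X : ZMod N → F) (a : F) : ℕ :=
  (Finset.univ.filter (fun t => X t = a)).card

/-- `N_U(a)`: total number of occurrences of `a` in the FHS set `U`. -/
def countFreqSet {N L : ℕ} [NeZero N] {F : Type*} [DecidableEq F]
    (U : Fin L → ZMod N → F) (a : F) : ℕ :=
  ∑ i : Fin L, countFreq (U i) a

/-- `S_a(U)`: sum of all out-of-phase Hamming autocorrelation values. -/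
def Sa {N L : ℕ} [NeZero N] {F : Type*} [DecidableEq F]
    (U : Fin L → ZMod N → F) : ℕ :=
  ∑ i : Fin L, ∑ τ ∈ Finset.univ \ {(0 : ZMod N)}, Hcorr (U i) (U i) τ

/-- `S_c(U)`: sum of all Hamming crosscorrelation values (ordered pairs `i ≠ j`). -/
def Sc {N L : ℕ} [NeZero N] {F : Type*} [DecidableEq F]
    (U : Fin L → ZMod N → F) : ℕ :=
  ∑ i : Fin L, ∑ j ∈ Finset.univ \ {i}, ∑ τ : ZMod N, Hcorr (U i) (U j) τ

/-- Average Hamming autocorrelation `A_a(U) = S_a(U)/(L(N-1))`. -/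
def Aa {N L : ℕ} [NeZero N] {F : Type*} [DecidableEq F]
    (U : Fin L → ZMod N → F) : ℚ :=
  (Sa U : ℚ) / ((L : ℚ) * ((N : ℚ) - 1))

/-- Average Hamming crosscorrelation `A_c(U) = S_c(U)/(L(L-1)N)`. -/
def Ac {N L : ℕ} [NeZero N] {F : Type*} [DecidableEq F]
    (U : Fin L → ZMod N → F) : ℚ :=
  (Sc U : ℚ) / ((L : ℚ) * ((L : ℚ) - 1) * (N : ℚ))

/-- `H_a(U)`: maximum out-of-phase Hamming autocorrelation of the set `U`. -/
def Ha {N L : ℕ} [NeZero N] {F : Type*} [DecidableEq F]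
    (U : Fin L → ZMod N → F) : ℕ :=
  Finset.univ.sup fun i => (Finset.univ \ {(0 : ZMod N)}).sup fun τ => Hcorr (U i) (U i) τ

/-- `H_c(U)`: maximum Hamming crosscorrelation of the set `U`. -/
def Hc {N L : ℕ} [NeZero N] {F : Type*} [DecidableEq F]
    (U : Fin L → ZMod N → F) : ℕ :=
  Finset.univ.sup fun i => (Finset.univ \ {i}).sup fun j =>
    Finset.univ.sup fun τ => Hcorr (U i) (U j) τ

/-- `U` has optimal average Hamming correlation (meets the Peng et al. AHC bound with equality). -/
def optimalAHC {N L : ℕ} [NeZero N] {F : Type*} [Fintype F] [DecidableEq F]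
    (U : Fin L → ZMod N → F) : Prop :=
  Aa U / ((N : ℚ) * ((L : ℚ) - 1)) + Ac U / ((N : ℚ) - 1)
    = ((N : ℚ) * L - Fintype.card F) /
      ((Fintype.card F : ℚ) * ((N : ℚ) - 1) * ((L : ℚ) - 1))

/-- The cyclotomic class `C_r = {α^(Ml+r) : 0 ≤ l ≤ f-1}`. -/
def cycClass {F : Type*} [Monoid F] [DecidableEq F] (α : F) (M f r : ℕ) : Finset F :=
  (Finset.range f).image fun l => α ^ (M * l + r)

/-- The cyclotomic number `(i,j)_M = |(C_i + 1) ∩ C_j|`. -/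
def cycNum {F : Type*} [Field F] [DecidableEq F] (α : F) (M f i j : ℕ) : ℕ :=
  (((cycClass α M f i).image fun x => x + 1) ∩ cycClass α M f j).card


lemma sum_Hcorr {N : ℕ} [NeZero N] {F : Type*} [Fintype F] [DecidableEq F]
    (X Y : ZMod N → F) :
    ∑ τ : ZMod N, Hcorr X Y τ = ∑ a : F, countFreq X a * countFreq Y a := by
  have h1 : ∀ τ, Hcorr X Y τ = ∑ t : ZMod N, if X t = Y (t + τ) then 1 else 0 := by
    intro τ; rw [Hcorr, Finset.card_filter]
  have h2 : ∀ a, countFreq Y a = ∑ s : ZMod N, if Y s = a then 1 else 0 := by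
    intro a; rw [countFreq, Finset.card_filter]
  calc ∑ τ : ZMod N, Hcorr X Y τ
      = ∑ τ : ZMod N, ∑ t : ZMod N, if X t = Y (t + τ) then 1 else 0 := by
        exact Finset.sum_congr rfl fun τ _ => h1 τ
    _ = ∑ t : ZMod N, ∑ τ : ZMod N, if X t = Y (t + τ) then 1 else 0 := Finset.sum_comm
    _ = ∑ t : ZMod N, countFreq Y (X t) := by
        refine Finset.sum_congr rfl fun t _ => ?_
        rw [h2]
        exact Fintype.sum_equiv (Equiv.addLeft t) _ _ (fun τ => by simp [eq_comm])
    _ = ∑ a : F, countFreq X a * countFreq Y a := by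
        rw [← Finset.sum_fiberwise Finset.univ X (fun t => countFreq Y (X t))]
        refine Finset.sum_congr rfl fun a _ => ?_
        rw [Finset.sum_congr rfl (fun t ht => by
          rw [(Finset.mem_filter.mp ht).2] : ∀ t ∈ Finset.univ.filter (fun t => X t = a),
            countFreq Y (X t) = countFreq Y a)]
        rw [Finset.sum_const, smul_eq_mul]
        rfl

/-- Construction A has average Hamming crosscorrelation `(Mf² + 2f)/(Mf + 1)`. -/
theorem constructionA_Ac (p M f : ℕ) [NeZero p] (hp : p.Prime) (hodd : Odd p)
    (hM : 2 ≤ M) (hf : 1 ≤ f) (hpMf : p = M * f + 1)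
    (α : ZMod p) (hα : ∀ x : ZMod p, x ≠ 0 → ∃ k : ℕ, α ^ k = x)
    (U : Fin M → ZMod p → ZMod M)
    (hU0 : ∀ i : Fin M, U i 0 = ((i : ℕ) : ZMod M))
    (hUC : ∀ (i : Fin M) (r : ℕ), r < M → ∀ t ∈ cycClass α M f r,
      U i t = (r : ZMod M) + ((i : ℕ) : ZMod M)) :
    Ac U = ((M : ℚ) * (f : ℚ) ^ 2 + 2 * (f : ℚ)) / ((M : ℚ) * (f : ℚ) + 1) := by
  haveI : Fact p.Prime := ⟨hp⟩
  haveI : NeZero M := ⟨by omega⟩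
  have hMf1 : 2 * 1 ≤ M * f := Nat.mul_le_mul hM hf
  have hp2 : 2 < p := by omega
  have hMfpos : 0 < M * f := by omega
  have hα0 : α ≠ 0 := by
    intro h
    obtain ⟨k, hk⟩ := hα (-1) (by
      intro h1
      have : (1 : ZMod p) = 0 := by linear_combination -h1
      exact one_ne_zero this)
    rw [h] at hk
    rcases Nat.eq_zero_or_pos k with hk0 | hk0
    · subst hk0
      rw [pow_zero] at hk
      have h2 : ((2 : ℕ) : ZMod p) = 0 := by push_cast; linear_combination hk
      have := (ZMod.natCast_eq_zero_iff 2 p).mp h2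
      have := Nat.le_of_dvd (by norm_num) this
      omega
    · rw [zero_pow (by omega)] at hk
      have : (1 : ZMod p) = 0 := by linear_combination hk
      exact one_ne_zero this
  set u : (ZMod p)ˣ := Units.mk0 α hα0 with hu_def
  have huval : (u : ZMod p) = α := rfl
  have hu : orderOf u = p - 1 := by
    rw [orderOf_eq_card_of_forall_mem_zpowers, Nat.card_eq_fintype_card, ZMod.card_units]
    intro x
    obtain ⟨k, hk⟩ := hα (x : ZMod p) (Units.ne_zero x)
    refine Subgroup.mem_zpowers_iff.mpr ⟨(k : ℤ), ?_⟩
    rw [zpow_natCast]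
    exact Units.ext (by rw [Units.val_pow_eq_pow_val, huval, hk])
  have hordα : orderOf α = M * f := by
    rw [← huval, orderOf_units, hu]; omega
  have hinj : ∀ a b : ℕ, a < M * f → b < M * f → α ^ a = α ^ b → a = b := by
    intro a b ha hb hab
    have hU : u ^ a = u ^ b :=
      Units.ext (by rw [Units.val_pow_eq_pow_val, Units.val_pow_eq_pow_val, huval]; exact hab)
    have horder : orderOf u = M * f := by rw [hu]; omega
    exact pow_injOn_Iio_orderOf (by rw [horder]; exact ha) (by rw [horder]; exact hb) hU
  have hlt : ∀ l r : ℕ, l < f → r < M → M * l + r < M * f := by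
    intro l r hl hr
    calc M * l + r < M * l + M := by omega
      _ = M * (l + 1) := by ring
      _ ≤ M * f := Nat.mul_le_mul_left M hl
  have hcardC : ∀ r, r < M → (cycClass α M f r).card = f := by
    intro r hr
    rw [cycClass, Finset.card_image_of_injOn, Finset.card_range]
    intro l1 h1 l2 h2 he
    simp only [Finset.coe_range, Set.mem_Iio] at h1 h2
    have h3 := hinj (M * l1 + r) (M * l2 + r) (hlt l1 r h1 hr) (hlt l2 r h2 hr) he
    have h4 : M * l1 = M * l2 := by omega
    exact Nat.eq_of_mul_eq_mul_left (by omega) h4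
  have hmem : ∀ t : ZMod p, t ≠ 0 → ∃ r, r < M ∧ t ∈ cycClass α M f r := by
    intro t ht
    obtain ⟨k, hk⟩ := hα t ht
    have hk' : α ^ (k % (M * f)) = t := by
      rw [← hordα, pow_mod_orderOf, hk]
    have hklt : k % (M * f) < M * f := Nat.mod_lt _ hMfpos
    refine ⟨k % (M * f) % M, Nat.mod_lt _ (by omega), ?_⟩
    rw [cycClass]
    simp only [Finset.mem_image, Finset.mem_range]
    refine ⟨k % (M * f) / M, ?_, ?_⟩
    · rw [Nat.div_lt_iff_lt_mul (by omega : 0 < M)]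
      exact lt_of_lt_of_eq hklt (mul_comm M f)
    · rw [Nat.div_add_mod (k % (M * f)) M, hk']
  have hcount : ∀ (i : Fin M) (a : ZMod M),
      countFreq (U i) a = f + (if a = ((i : ℕ) : ZMod M) then 1 else 0) := by
    intro i a
    set r₀ := (a - ((i : ℕ) : ZMod M)).val with hr₀def
    have hr₀M : r₀ < M := ZMod.val_lt _
    have hr₀cast : ((r₀ : ℕ) : ZMod M) = a - ((i : ℕ) : ZMod M) := by
      rw [hr₀def, ZMod.natCast_val, ZMod.cast_id]
    have hfilter : (Finset.univ.erase (0 : ZMod p)).filter (fun t => U i t = a)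
        = cycClass α M f r₀ := by
      ext t
      simp only [Finset.mem_filter, Finset.mem_erase, Finset.mem_univ, true_and, and_true]
      constructor
      · rintro ⟨ht0, hta⟩
        obtain ⟨r, hrM, htr⟩ := hmem t ht0
        have h1 : (r : ZMod M) + ((i : ℕ) : ZMod M) = a := by
          rw [← hUC i r hrM t htr]; exact hta
        have hrr : (r : ZMod M) = (r₀ : ZMod M) := by
          rw [hr₀cast]
          linear_combination h1
        have hre : r = r₀ := by
          have h2 := congrArg ZMod.val hrr
          rwa [ZMod.val_natCast_of_lt hrM, ZMod.val_natCast_of_lt hr₀M] at h2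
        rwa [← hre]
      · intro htc
        have ht0 : t ≠ 0 := by
          rw [cycClass] at htc
          simp only [Finset.mem_image, Finset.mem_range] at htc
          obtain ⟨l, _, hl⟩ := htc
          rw [← hl]
          exact pow_ne_zero _ hα0
        refine ⟨ht0, ?_⟩
        rw [hUC i r₀ hr₀M t htc, hr₀cast]
        ring
    have h0C : (0 : ZMod p) ∉ cycClass α M f r₀ := by
      rw [cycClass]
      simp only [Finset.mem_image, Finset.mem_range]
      rintro ⟨l, _, hl⟩
      exact pow_ne_zero _ hα0 hl
    rw [countFreq, ← Finset.insert_erase (Finset.mem_univ (0 : ZMod p)), Finset.filter_insert]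
    by_cases ha : a = ((i : ℕ) : ZMod M)
    · rw [if_pos (show U i 0 = a by rw [hU0, ha]), hfilter,
        Finset.card_insert_of_notMem h0C, hcardC r₀ hr₀M, if_pos ha]
    · rw [if_neg (show ¬ U i 0 = a from fun hh => ha ((hU0 i).symm.trans hh).symm),
        hfilter, hcardC r₀ hr₀M, if_neg ha]
      rfl
  have hsum : ∀ i j : Fin M, i ≠ j →
      ∑ τ : ZMod p, Hcorr (U i) (U j) τ = M * (f * f) + 2 * f := by
    intro i j hij
    have hij' : ((i : ℕ) : ZMod M) ≠ ((j : ℕ) : ZMod M) := by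
      intro h
      apply hij
      have h2 := congrArg ZMod.val h
      rw [ZMod.val_natCast_of_lt i.isLt, ZMod.val_natCast_of_lt j.isLt] at h2
      exact Fin.ext h2
    rw [sum_Hcorr]
    have hterm : ∀ a : ZMod M, countFreq (U i) a * countFreq (U j) a
        = f * f + ((if a = ((i : ℕ) : ZMod M) then f else 0)
            + (if a = ((j : ℕ) : ZMod M) then f else 0)) := by
      intro a
      rw [hcount i a, hcount j a]
      split_ifs with h1 h2 h2
      · exact absurd (h1.symm.trans h2) hij'
      · ring
      · ring
      · ring
    rw [Finset.sum_congr rfl fun a _ => hterm a]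
    rw [Finset.sum_add_distrib, Finset.sum_add_distrib, Finset.sum_const,
      Finset.sum_ite_eq' Finset.univ, Finset.sum_ite_eq' Finset.univ,
      if_pos (Finset.mem_univ _), if_pos (Finset.mem_univ _)]
    simp only [Finset.card_univ, ZMod.card, smul_eq_mul]
    omega
  have hSc : Sc U = M * (M - 1) * (M * (f * f) + 2 * f) := by
    rw [Sc]
    have hinner : ∀ i : Fin M, ∑ j ∈ Finset.univ \ {i}, ∑ τ : ZMod p, Hcorr (U i) (U j) τ
        = (M - 1) * (M * (f * f) + 2 * f) := by
      intro i
      rw [Finset.sum_congr rfl (fun j hj => hsum i j (by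
        simp only [Finset.mem_sdiff, Finset.mem_univ, Finset.mem_singleton, true_and] at hj
        exact fun h => hj h.symm))]
      rw [Finset.sum_const, smul_eq_mul]
      congr 1
      rw [Finset.card_sdiff_of_subset (by simp), Finset.card_singleton, Finset.card_univ, Fintype.card_fin]
    rw [Finset.sum_congr rfl fun i _ => hinner i, Finset.sum_const, smul_eq_mul,
      Finset.card_univ, Fintype.card_fin, mul_assoc]
  rw [Ac, hSc]
  have hcast : ((M * (M - 1) * (M * (f * f) + 2 * f) : ℕ) : ℚ)
      = (M : ℚ) * ((M : ℚ) - 1) * ((M : ℚ) * (f : ℚ) ^ 2 + 2 * (f : ℚ)) := by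
    push_cast [Nat.cast_sub (by omega : 1 ≤ M)]
    ring
  have hpcast : ((p : ℕ) : ℚ) = (M : ℚ) * (f : ℚ) + 1 := by
    rw [hpMf]; push_cast; ring
  rw [hcast, hpcast]
  have hM0 : (M : ℚ) ≠ 0 := by positivity
  have hM1 : (M : ℚ) - 1 ≠ 0 := by
    have : (2 : ℚ) ≤ (M : ℚ) := by exact_mod_cast hM
    intro h; linarith
  have hMf0 : (M : ℚ) * (f : ℚ) + 1 ≠ 0 := by positivity
  field_simp
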